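/- Let k ≥ 1 and let p : {-k,…,k} → ℝ be a probability mass function (p_n ≥ 0, ∑ p_n = 1) with mean m = ∑ n·p_n satisfying -k < m < k. If (k-m)·p_{n+1} = (k+m)·p_n for all -k ≤ n ≤ k-1, then p is the uniform distribution: p_n = 1/(2k+1) for all n. -/
import Mathlib

set_option maxHeartbeats 1600000 in
theorem equilibrium_is_uniform (k : ℕ) (hk : 1 ≤ k) (p : ℤ → ℝ)
    (hpos : ∀ n ∈ Finset.Icc (-(k : ℤ)) (k : ℤ), 0 ≤ p n)
    (hsum : ∑ n ∈ Finset.Icc (-(k : ℤ)) (k : ℤ), p n = 1)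
    (m : ℝ) (hm : m = ∑ n ∈ Finset.Icc (-(k : ℤ)) (k : ℤ), (n : ℝ) * p n)
    (hml : -(k : ℝ) < m) (hmr : m < (k : ℝ))
    (hrec : ∀ n ∈ Finset.Icc (-(k : ℤ)) ((k : ℤ) - 1),
      ((k : ℝ) - m) * p (n + 1) = ((k : ℝ) + m) * p n) :
    ∀ n ∈ Finset.Icc (-(k : ℤ)) (k : ℤ), p n = 1 / (2 * (k : ℝ) + 1) := by
  have hkR : (1:ℝ) ≤ (k:ℝ) := by exact_mod_cast hk
  obtain ⟨K, hK⟩ : ∃ K : ℝ, (k:ℝ) = K := ⟨_, rfl⟩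
  rw [hK] at hkR hml hmr
  simp only [hK] at hrec
  rw [hK]
  obtain ⟨M2, hM2def⟩ : ∃ M2 : ℝ, ∑ n ∈ Finset.Icc (-(k:ℤ)) (k:ℤ), (n:ℝ)^2 * p n = M2 :=
    ⟨_, rfl⟩
  -- shift and split lemmas
  have hshift : ∀ f : ℤ → ℝ, ∑ n ∈ Finset.Icc (-(k:ℤ)) ((k:ℤ)-1), f (n+1)
      = ∑ n ∈ Finset.Icc (-(k:ℤ)+1) (k:ℤ), f n := by
    intro f
    have h := Finset.map_add_right_Icc (-(k:ℤ)) ((k:ℤ)-1) 1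
    rw [show (k:ℤ)-1+1 = (k:ℤ) by ring] at h
    rw [← h, Finset.sum_map]
    simp
  have hsplitL : ∀ f : ℤ → ℝ, ∑ n ∈ Finset.Icc (-(k:ℤ)) (k:ℤ), f n
      = f (-(k:ℤ)) + ∑ n ∈ Finset.Icc (-(k:ℤ)+1) (k:ℤ), f n := by
    intro f
    rw [show Finset.Icc (-(k:ℤ)) (k:ℤ) = insert (-(k:ℤ)) (Finset.Icc (-(k:ℤ)+1) (k:ℤ)) by
      ext x; simp [Finset.mem_Icc]; omega, Finset.sum_insert (by simp)]
  have hsplitR : ∀ f : ℤ → ℝ, ∑ n ∈ Finset.Icc (-(k:ℤ)) (k:ℤ), f n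
      = (∑ n ∈ Finset.Icc (-(k:ℤ)) ((k:ℤ)-1), f n) + f (k:ℤ) := by
    intro f
    rw [show Finset.Icc (-(k:ℤ)) (k:ℤ) = insert (k:ℤ) (Finset.Icc (-(k:ℤ)) ((k:ℤ)-1)) by
      ext x; simp [Finset.mem_Icc]; omega, Finset.sum_insert (by simp)]
    ring
  -- boundary sums
  have S1L : ∑ n ∈ Finset.Icc (-(k:ℤ)+1) (k:ℤ), p n = 1 - p (-(k:ℤ)) := by
    have := hsplitL p; rw [hsum] at this; linarith
  have S1R : ∑ n ∈ Finset.Icc (-(k:ℤ)) ((k:ℤ)-1), p n = 1 - p (k:ℤ) := by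
    have := hsplitR p; rw [hsum] at this; linarith
  have S2L : ∑ n ∈ Finset.Icc (-(k:ℤ)+1) (k:ℤ), ((n:ℝ)-1) * p n
      = (m - 1) - (-K-1) * p (-(k:ℤ)) := by
    have h1 := hsplitL (fun n => ((n:ℝ)-1) * p n)
    have h2 : ∑ n ∈ Finset.Icc (-(k:ℤ)) (k:ℤ), ((n:ℝ)-1) * p n = m - 1 := by
      have e1 : ∑ n ∈ Finset.Icc (-(k:ℤ)) (k:ℤ), ((n:ℝ)-1) * p n
          = ∑ n ∈ Finset.Icc (-(k:ℤ)) (k:ℤ), ((n:ℝ) * p n - p n) :=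
        Finset.sum_congr rfl (fun n _ => by ring)
      rw [e1, Finset.sum_sub_distrib, hsum, ← hm]
    rw [h2] at h1
    simp only [Int.cast_neg, Int.cast_natCast, hK] at h1
    linarith
  have S2R : ∑ n ∈ Finset.Icc (-(k:ℤ)) ((k:ℤ)-1), (n:ℝ) * p n = m - K * p (k:ℤ) := by
    have h1 := hsplitR (fun n => (n:ℝ) * p n)
    rw [← hm] at h1
    simp only [Int.cast_natCast, hK] at h1
    linarith
  have S3L : ∑ n ∈ Finset.Icc (-(k:ℤ)+1) (k:ℤ), ((n:ℝ)-1)^2 * p n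
      = (M2 - 2*m + 1) - (-K-1)^2 * p (-(k:ℤ)) := by
    have h1 := hsplitL (fun n => ((n:ℝ)-1)^2 * p n)
    have h2 : ∑ n ∈ Finset.Icc (-(k:ℤ)) (k:ℤ), ((n:ℝ)-1)^2 * p n = M2 - 2*m + 1 := by
      have e1 : ∑ n ∈ Finset.Icc (-(k:ℤ)) (k:ℤ), ((n:ℝ)-1)^2 * p n
          = ∑ n ∈ Finset.Icc (-(k:ℤ)) (k:ℤ), ((n:ℝ)^2 * p n - 2*((n:ℝ) * p n) + p n) :=
        Finset.sum_congr rfl (fun n _ => by ring)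
      rw [e1, Finset.sum_add_distrib, Finset.sum_sub_distrib, ← Finset.mul_sum,
        hsum, ← hm, hM2def]
    rw [h2] at h1
    simp only [Int.cast_neg, Int.cast_natCast, hK] at h1
    linarith
  have S3R : ∑ n ∈ Finset.Icc (-(k:ℤ)) ((k:ℤ)-1), (n:ℝ)^2 * p n = M2 - K^2 * p (k:ℤ) := by
    have h1 := hsplitR (fun n => (n:ℝ)^2 * p n)
    rw [hM2def] at h1
    simp only [Int.cast_natCast, hK] at h1
    linarith
  -- summed recurrence identities
  have hA : (K-m) * (1 - p (-(k:ℤ))) = (K+m) * (1 - p (k:ℤ)) := by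
    rw [← S1L, ← S1R, ← hshift p, Finset.mul_sum, Finset.mul_sum]
    exact Finset.sum_congr rfl (fun n hn => hrec n hn)
  have hB : (K-m) * ((m - 1) - (-K-1) * p (-(k:ℤ))) = (K+m) * (m - K * p (k:ℤ)) := by
    rw [← S2L, ← S2R, ← hshift (fun j => ((j:ℝ)-1) * p j), Finset.mul_sum, Finset.mul_sum]
    refine Finset.sum_congr rfl (fun n hn => ?_)
    have h := hrec n hn
    push_cast
    linear_combination (n:ℝ) * h
  have hC : (K-m) * ((M2 - 2*m + 1) - (-K-1)^2 * p (-(k:ℤ))) = (K+m) * (M2 - K^2 * p (k:ℤ)) := by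
    rw [← S3L, ← S3R, ← hshift (fun j => ((j:ℝ)-1)^2 * p j), Finset.mul_sum, Finset.mul_sum]
    refine Finset.sum_congr rfl (fun n hn => ?_)
    have h := hrec n hn
    push_cast
    linear_combination (n:ℝ)^2 * h
  have hKm1 : (0:ℝ) < K - m := by linarith
  have hKm2 : (0:ℝ) < K + m := by linarith
  -- extreme values
  have hb0 : (K+m) * ((2*K+1) * p (k:ℤ) - (2*m+1)) = 0 := by
    linear_combination hB + (K+1) * hA
  have ha0 : (K-m) * ((2*K+1) * p (-(k:ℤ)) - (1-2*m)) = 0 := by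
    linear_combination hB - K * hA
  have hb2 : (2*K+1) * p (k:ℤ) - (2*m+1) = 0 := by
    rcases mul_eq_zero.mp hb0 with h | h
    · exfalso; linarith
    · exact h
  have ha2 : (2*K+1) * p (-(k:ℤ)) - (1-2*m) = 0 := by
    rcases mul_eq_zero.mp ha0 with h | h
    · exfalso; linarith
    · exact h
  -- second moment identity
  have g : (-2*(2*K+1)) * (m * (M2 - K^2)) = 0 := by
    linear_combination (2*K+1) * hC + (K-m)*(K+1)^2 * ha2 - (K+m)*K^2 * hb2
  have hM2z : m * (M2 - K^2) = 0 := by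
    rcases mul_eq_zero.mp g with h | h
    · exfalso; nlinarith
    · exact h
  rcases mul_eq_zero.mp hM2z with hm0 | hM2K
  · -- m = 0 : uniform
    have hK0 : (0:ℝ) < K := by linarith
    have hstep : ∀ n ∈ Finset.Icc (-(k:ℤ)) ((k:ℤ)-1), p (n+1) = p n := by
      intro n hn
      have h := hrec n hn
      rw [hm0] at h
      exact mul_left_cancel₀ hK0.ne' (by linarith)
    have hconst : ∀ j : ℕ, (j:ℤ) ≤ 2*k → p (-(k:ℤ) + j) = p (-(k:ℤ)) := by
      intro j
      induction j with
      | zero => simp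
      | succ i ih =>
        intro hj
        have h1 : (i:ℤ) ≤ 2*k := by push_cast at hj ⊢; omega
        have h2 := hstep (-(k:ℤ)+i) (by simp only [Finset.mem_Icc]; push_cast at hj ⊢; omega)
        rw [show (-(k:ℤ) + ((i:ℕ)+1:ℕ)) = (-(k:ℤ)+(i:ℕ)) + 1 by push_cast; ring, h2, ih h1]
    have hpconst : ∀ n ∈ Finset.Icc (-(k:ℤ)) (k:ℤ), p n = p (-(k:ℤ)) := by
      intro n hn
      rw [Finset.mem_Icc] at hn
      have h1 : ((n + k).toNat : ℤ) ≤ 2*k := by omega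
      have := hconst (n + k).toNat h1
      rw [show -(k:ℤ) + ((n + (k:ℤ)).toNat : ℤ) = n by omega] at this
      exact this
    have hcardI : (((Finset.Icc (-(k:ℤ)) (k:ℤ)).card : ℕ) : ℝ) = 2*K+1 := by
      rw [Int.card_Icc, show ((k:ℤ) + 1 - -(k:ℤ)).toNat = 2*k+1 by omega]
      push_cast [hK]
      ring
    have hcard1 : (1:ℝ) = (2*K+1) * p (-(k:ℤ)) := by
      calc (1:ℝ) = ∑ n ∈ Finset.Icc (-(k:ℤ)) (k:ℤ), p n := hsum.symm
        _ = ∑ n ∈ Finset.Icc (-(k:ℤ)) (k:ℤ), p (-(k:ℤ)) := Finset.sum_congr rfl hpconst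
        _ = (((Finset.Icc (-(k:ℤ)) (k:ℤ)).card : ℕ) : ℝ) * p (-(k:ℤ)) := by
            rw [Finset.sum_const, nsmul_eq_mul]
        _ = (2*K+1) * p (-(k:ℤ)) := by rw [hcardI]
    intro n hn
    rw [hpconst n hn, eq_div_iff (by positivity : 2*K+1 ≠ 0)]
    linear_combination -hcard1
  · -- M2 = K^2 : contradiction
    exfalso
    have hM2K' : M2 = K^2 := by linarith
    have hz : ∑ n ∈ Finset.Icc (-(k:ℤ)) (k:ℤ), (K^2 - (n:ℝ)^2) * p n = 0 := by
      have e1 : ∑ n ∈ Finset.Icc (-(k:ℤ)) (k:ℤ), (K^2 - (n:ℝ)^2) * p n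
          = ∑ n ∈ Finset.Icc (-(k:ℤ)) (k:ℤ), (K^2 * p n - (n:ℝ)^2 * p n) :=
        Finset.sum_congr rfl (fun n _ => by ring)
      rw [e1, Finset.sum_sub_distrib, ← Finset.mul_sum, hsum, hM2def, hM2K']
      ring
    have hnn : ∀ n ∈ Finset.Icc (-(k:ℤ)) (k:ℤ), 0 ≤ (K^2 - (n:ℝ)^2) * p n := by
      intro n hn
      have hn' := hn
      rw [Finset.mem_Icc] at hn'
      have h1 : -K ≤ (n:ℝ) := by rw [← hK]; exact_mod_cast hn'.1
      have h2 : (n:ℝ) ≤ K := by rw [← hK]; exact_mod_cast hn'.2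
      have h3 : (0:ℝ) ≤ (K - (n:ℝ)) * (K + (n:ℝ)) :=
        mul_nonneg (by linarith) (by linarith)
      exact mul_nonneg (by nlinarith [h3]) (hpos n hn)
    have hzero := (Finset.sum_eq_zero_iff_of_nonneg hnn).mp hz
    have pk1 : p ((k:ℤ)-1) = 0 := by
      have hmem : ((k:ℤ)-1) ∈ Finset.Icc (-(k:ℤ)) (k:ℤ) := by rw [Finset.mem_Icc]; omega
      have h := hzero _ hmem
      have hcast : (((k:ℤ)-1 : ℤ):ℝ) = K - 1 := by push_cast [hK]; ring
      rw [hcast] at h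
      rcases mul_eq_zero.mp h with h' | h'
      · exfalso; nlinarith
      · exact h'
    have pmk1 : p (-(k:ℤ)+1) = 0 := by
      have hmem : (-(k:ℤ)+1) ∈ Finset.Icc (-(k:ℤ)) (k:ℤ) := by rw [Finset.mem_Icc]; omega
      have h := hzero _ hmem
      have hcast : ((-(k:ℤ)+1 : ℤ):ℝ) = -K + 1 := by push_cast [hK]; ring
      rw [hcast] at h
      rcases mul_eq_zero.mp h with h' | h'
      · exfalso; nlinarith
      · exact h'
    have hbp : p (k:ℤ) = 0 := by
      have h := hrec ((k:ℤ)-1) (by rw [Finset.mem_Icc]; omega)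
      rw [show (k:ℤ)-1+1 = (k:ℤ) by ring, pk1, mul_zero] at h
      rcases mul_eq_zero.mp h with h' | h'
      · exfalso; linarith
      · exact h'
    have hap : p (-(k:ℤ)) = 0 := by
      have h := hrec (-(k:ℤ)) (by rw [Finset.mem_Icc]; omega)
      rw [pmk1, mul_zero] at h
      rcases mul_eq_zero.mp h.symm with h' | h'
      · exfalso; linarith
      · exact h'
    rw [hbp] at hb2
    rw [hap] at ha2
    linarith
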